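/- The intersection of the set of strictly incoherent operations with the set of coherence breaking channels equals the intersection of the set of dephasing-covariant incoherent operations with the set of coherence breaking channels, up to allowing permutations in the SIO case: every channel in SIO∩CBC has the form ρ ↦ ∑_k ρ_{kk} ∑_i |d_{ik}|² |π_i(k)⟩⟨π_i(k)|, which depends only on the diagonal of ρ. -/

import Mathlib

open Matrix ComplexOrder

/-- The dephasing map `Δ(ρ) = ∑_i ⟨i|ρ|i⟩ |i⟩⟨i|`. -/
def deph {d : ℕ} (ρ : Matrix (Fin d) (Fin d) ℂ) : Matrix (Fin d) (Fin d) ℂ :=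
  Matrix.diagonal fun i => ρ i i

/-- A quantum channel: admits a Kraus decomposition with the completeness relation. -/
def IsChannel {d : ℕ} (Φ : Matrix (Fin d) (Fin d) ℂ → Matrix (Fin d) (Fin d) ℂ) : Prop :=
  ∃ (N : ℕ) (K : Fin N → Matrix (Fin d) (Fin d) ℂ),
    (∑ n, (K n)ᴴ * K n = 1) ∧ ∀ ρ, Φ ρ = ∑ n, K n * ρ * (K n)ᴴ

/-- A dephasing-covariant operation (DIO): a channel commuting with the dephasing map. -/
def IsDIO {d : ℕ} (Φ : Matrix (Fin d) (Fin d) ℂ → Matrix (Fin d) (Fin d) ℂ) : Prop :=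
  IsChannel Φ ∧ ∀ ρ, deph (Φ ρ) = Φ (deph ρ)

/-- A strictly incoherent operation (SIO): a channel admitting a Kraus decomposition with
operators of the form `M_n = ∑_j d_{nj} |π_n(j)⟩⟨j|` for permutations `π_n`. -/
def IsSIO {d : ℕ} (Φ : Matrix (Fin d) (Fin d) ℂ → Matrix (Fin d) (Fin d) ℂ) : Prop :=
  ∃ (N : ℕ) (c : Fin N → Fin d → ℂ) (π : Fin N → Equiv.Perm (Fin d)),
    (∑ n, (Matrix.of fun a b => if a = π n b then c n b else 0)ᴴ *
        (Matrix.of fun a b => if a = π n b then c n b else 0) = 1) ∧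
    ∀ ρ, Φ ρ = ∑ n, (Matrix.of fun a b => if a = π n b then c n b else 0) * ρ *
        (Matrix.of fun a b => if a = π n b then c n b else 0)ᴴ

/-- A coherence breaking channel: an incoherent channel (Kraus operators mapping diagonal
matrices to diagonal matrices) whose output is diagonal on every density matrix. -/
def IsCBCfn {d : ℕ} (Φ : Matrix (Fin d) (Fin d) ℂ → Matrix (Fin d) (Fin d) ℂ) : Prop :=
  (∃ (N : ℕ) (K : Fin N → Matrix (Fin d) (Fin d) ℂ),
    (∑ n, (K n)ᴴ * K n = 1) ∧
    (∀ n (A : Matrix (Fin d) (Fin d) ℂ), A.IsDiag → (K n * A * (K n)ᴴ).IsDiag) ∧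
    ∀ ρ, Φ ρ = ∑ n, K n * ρ * (K n)ᴴ) ∧
  ∀ ρ : Matrix (Fin d) (Fin d) ℂ, ρ.PosSemidef → ρ.trace = 1 → (Φ ρ).IsDiag

variable {d N : ℕ}


/-- Kraus map as a linear map. -/
noncomputable def krausMap (K : Fin N → Matrix (Fin d) (Fin d) ℂ) :
    Matrix (Fin d) (Fin d) ℂ →ₗ[ℂ] Matrix (Fin d) (Fin d) ℂ where
  toFun ρ := ∑ n, K n * ρ * (K n)ᴴ
  map_add' ρ σ := by
    simp [mul_add, add_mul, Finset.sum_add_distrib]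
  map_smul' a ρ := by
    simp [Matrix.mul_smul, Matrix.smul_mul, Finset.smul_sum]

/-- rank one matrix -/
def rankOne (v : Fin d → ℂ) : Matrix (Fin d) (Fin d) ℂ :=
  Matrix.of fun a b => v a * star (v b)

lemma rankOne_posSemidef (v : Fin d → ℂ) : (rankOne v).PosSemidef := by
  refine Matrix.PosSemidef.of_dotProduct_mulVec_nonneg ?_ ?_
  · ext a b
    simp [rankOne, Matrix.conjTranspose_apply, mul_comm]
  · intro x
    have : dotProduct (star x) ((rankOne v) *ᵥ x) =
        star (∑ b, star (v b) * x b) * (∑ b, star (v b) * x b) := by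
      simp only [dotProduct, Matrix.mulVec, rankOne, Matrix.of_apply, dotProduct,
        Finset.mul_sum, Finset.sum_mul, star_sum, Pi.star_apply]
      rw [Finset.sum_comm]
      apply Finset.sum_congr rfl; intro a _
      apply Finset.sum_congr rfl; intro b _
      simp only [StarMul.star_mul, star_star]; ring
    rw [this]
    exact star_mul_self_nonneg _

lemma rankOne_trace (v : Fin d → ℂ) :
    (rankOne v).trace = ∑ a, (Complex.normSq (v a) : ℂ) := by
  simp [Matrix.trace, Matrix.diag, rankOne, Complex.mul_conj]

/-- Entry formula for an SIO Kraus conjugation. -/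
lemma sio_apply (c : Fin d → ℂ) (π : Equiv.Perm (Fin d)) (ρ : Matrix (Fin d) (Fin d) ℂ)
    (a b : Fin d) :
    ((Matrix.of fun a b => if a = π b then c b else 0) * ρ *
      (Matrix.of fun a b => if a = π b then c b else 0)ᴴ) a b =
    c (π.symm a) * ρ (π.symm a) (π.symm b) * star (c (π.symm b)) := by
  rw [Matrix.mul_apply]
  rw [Finset.sum_eq_single (π.symm b)]
  · rw [Matrix.mul_apply, Finset.sum_eq_single (π.symm a)]
    · simp [Matrix.conjTranspose_apply]
    · intro x _ hx
      have : ¬ a = π x := by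
        intro h; exact hx (by simp [h])
      simp [this]
    · simp
  · intro y _ hy
    have : ¬ b = π y := by
      intro h; exact hy (by simp [h])
    simp [Matrix.conjTranspose_apply, this]
  · simp

/-- Entry formula for `Mᴴ M` for an SIO Kraus operator. -/
lemma sio_conjT_mul (c : Fin d → ℂ) (π : Equiv.Perm (Fin d)) (x y : Fin d) :
    ((Matrix.of fun a b => if a = π b then c b else 0)ᴴ *
      (Matrix.of fun a b => if a = π b then c b else 0)) x y =
    if x = y then star (c x) * c x else 0 := by
  rw [Matrix.mul_apply]
  rcases eq_or_ne x y with rfl | hxy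
  · rw [Finset.sum_eq_single (π x)]
    · simp [Matrix.conjTranspose_apply]
    · intro z _ hz
      have : ¬ z = π x := hz
      simp [Matrix.conjTranspose_apply, this]
    · simp
  · rw [if_neg hxy]
    apply Finset.sum_eq_zero
    intro z _
    rcases eq_or_ne z (π x) with rfl | hz
    · have : ¬ π x = π y := fun h => hxy (π.injective h)
      simp [Matrix.conjTranspose_apply, this]
    · simp [Matrix.conjTranspose_apply, hz]

lemma sum_pair_ite {j k : Fin d} (h : j ≠ k) (A B : ℂ) :
    ∑ i, (if i = j then A else if i = k then B else 0) = A + B := by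
  have : ∀ i : Fin d, (if i = j then A else if i = k then B else 0) =
      (if i = j then A else 0) + (if i = k then B else 0) := by
    intro i
    rcases eq_or_ne i j with rfl | hij
    · simp [h]
    · simp [hij]
  simp [this, Finset.sum_add_distrib]

lemma stdBasisMatrix_apply' (j k a b : Fin d) (v : ℂ) :
    Matrix.single j k v a b = if a = j ∧ b = k then v else 0 := by
  simp [Matrix.single, eq_comm]

lemma stdBasis_decomp {j k : Fin d} (h : j ≠ k) :
    Matrix.single j k (1 : ℂ) =
      rankOne (fun i => if i = j then ((Real.sqrt 2)⁻¹ : ℝ) else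
          if i = k then ((Real.sqrt 2)⁻¹ : ℝ) else 0)
      + Complex.I • rankOne (fun i => if i = j then ((Real.sqrt 2)⁻¹ : ℝ) else
          if i = k then ((Real.sqrt 2)⁻¹ : ℝ) * Complex.I else 0)
      - ((1 + Complex.I) / 2) • (rankOne (fun i => if i = j then 1 else 0)
          + rankOne (fun i => if i = k then 1 else 0)) := by
  have hr : ((((Real.sqrt 2)⁻¹ : ℝ)) : ℂ) * ((((Real.sqrt 2)⁻¹ : ℝ)) : ℂ) = 2⁻¹ := by
    have h2 : ((Real.sqrt 2 : ℝ)⁻¹ * (Real.sqrt 2 : ℝ)⁻¹ : ℝ) = 2⁻¹ := by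
      rw [← mul_inv, Real.mul_self_sqrt (by norm_num)]
    rw [← Complex.ofReal_mul, h2]
    norm_num
  ext a b
  simp only [stdBasisMatrix_apply', rankOne, Matrix.of_apply, Matrix.add_apply,
    Matrix.sub_apply, Matrix.smul_apply, smul_eq_mul]
  by_cases haj : a = j <;> by_cases hak : a = k <;> by_cases hbj : b = j <;>
    by_cases hbk : b = k <;>
    simp only [haj, hak, hbj, hbk, h, h.symm, if_true, if_false, if_neg, and_self, and_true,
      true_and, and_false, false_and, ite_true, ite_false, star_zero, mul_zero, zero_mul,
      Complex.star_def, _root_.map_mul, Complex.conj_ofReal, Complex.conj_I, _root_.map_one,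
      star_one, ne_eq, not_false_eq_true] <;>
    (try simp only [show (j = k) = False from by simp [h], show (k = j) = False from by simp [h.symm],
      haj, hak, hbj, hbk, ite_false, ite_true, if_true, if_false, star_zero, mul_zero, zero_mul,
      eq_self_iff_true]) <;>
    first
      | ring1
      | linear_combination (-(1+Complex.I)) * hr +
          (((((Real.sqrt 2)⁻¹ : ℝ)) : ℂ) * ((((Real.sqrt 2)⁻¹ : ℝ)) : ℂ) * Complex.I) * Complex.I_sq
      | linear_combination (-(((((Real.sqrt 2)⁻¹ : ℝ)) : ℂ) * ((((Real.sqrt 2)⁻¹ : ℝ)) : ℂ))) * Complex.I_sq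
      | linear_combination (-(1+Complex.I)) * hr
      | linear_combination (-2:ℂ) * hr +
          (((((Real.sqrt 2)⁻¹ : ℝ)) : ℂ) * ((((Real.sqrt 2)⁻¹ : ℝ)) : ℂ)) * Complex.I_sq

lemma sum_ite_eq_normSq {k : Fin d} (A : ℂ) :
    ∑ a : Fin d, (Complex.normSq (if a = k then A else 0) : ℂ) = Complex.normSq A := by
  rw [Finset.sum_congr rfl (g := fun a => if a = k then (Complex.normSq A : ℂ) else 0)]
  · simp
  · intro a _
    by_cases hak : a = k <;> simp [hak]

lemma rankOne_trace_pair {j k : Fin d} (h : j ≠ k) (A B : ℂ)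
    (hAB : Complex.normSq A + Complex.normSq B = 1) :
    (rankOne (fun i => if i = j then A else if i = k then B else 0)).trace = 1 := by
  rw [rankOne_trace]
  have : ∀ i : Fin d, (Complex.normSq (if i = j then A else if i = k then B else 0) : ℂ) =
      if i = j then (Complex.normSq A : ℂ) else if i = k then (Complex.normSq B : ℂ) else 0 := by
    intro i
    by_cases hij : i = j <;> by_cases hik : i = k <;> simp [hij, hik, Ne.symm h]
  rw [Finset.sum_congr rfl fun i _ => this i, sum_pair_ite h]
  rw [← Complex.ofReal_add, hAB, Complex.ofReal_one]

lemma rankOne_trace_single (k : Fin d) :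
    (rankOne (fun i => if i = k then (1 : ℂ) else 0)).trace = 1 := by
  rw [rankOne_trace, sum_ite_eq_normSq]
  simp

/-- Every output of a CBC-type Kraus map is diagonal. -/
lemma kraus_diag_all (K : Fin N → Matrix (Fin d) (Fin d) ℂ)
    (Φ : Matrix (Fin d) (Fin d) ℂ → Matrix (Fin d) (Fin d) ℂ)
    (hrep : ∀ ρ, Φ ρ = ∑ n, K n * ρ * (K n)ᴴ)
    (hdiag : ∀ ρ : Matrix (Fin d) (Fin d) ℂ, ρ.PosSemidef → ρ.trace = 1 → (Φ ρ).IsDiag) :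
    ∀ ρ, (Φ ρ).IsDiag := by
  have hΦ : ∀ ρ, Φ ρ = krausMap K ρ := fun ρ => hrep ρ
  have hrk : ∀ v : Fin d → ℂ, (rankOne v).trace = 1 → (krausMap K (rankOne v)).IsDiag := by
    intro v hv
    rw [← hΦ]
    exact hdiag _ (rankOne_posSemidef v) hv
  have hnormr : Complex.normSq ((((Real.sqrt 2)⁻¹ : ℝ)) : ℂ) = 2⁻¹ := by
    rw [Complex.normSq_ofReal, ← mul_inv, Real.mul_self_sqrt (by norm_num)]
  have hE : ∀ j k : Fin d, (krausMap K (Matrix.single j k (1 : ℂ))).IsDiag := by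
    intro j k
    rcases eq_or_ne j k with rfl | hjk
    · have hsb : Matrix.single j j (1 : ℂ) =
          rankOne (fun i => if i = j then 1 else 0) := by
        ext a b
        rw [stdBasisMatrix_apply']
        by_cases haj : a = j <;> by_cases hbj : b = j <;>
          simp [rankOne, haj, hbj]
      rw [hsb]
      exact hrk _ (rankOne_trace_single j)
    · rw [stdBasis_decomp hjk, map_sub, map_add, _root_.map_smul, _root_.map_smul, map_add]
      refine Matrix.IsDiag.sub (Matrix.IsDiag.add ?_ (Matrix.IsDiag.smul _ ?_))
        (Matrix.IsDiag.smul _ (Matrix.IsDiag.add ?_ ?_))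
      · refine hrk _ (rankOne_trace_pair hjk _ _ ?_)
        rw [hnormr]; norm_num
      · refine hrk _ (rankOne_trace_pair hjk _ _ ?_)
        rw [hnormr, Complex.normSq_mul, hnormr, Complex.normSq_I]; norm_num
      · exact hrk _ (rankOne_trace_single j)
      · exact hrk _ (rankOne_trace_single k)
  intro ρ
  rw [hΦ, matrix_eq_sum_single ρ]
  intro a b hab
  rw [map_sum, Matrix.sum_apply]
  refine Finset.sum_eq_zero fun j _ => ?_
  rw [map_sum, Matrix.sum_apply]
  refine Finset.sum_eq_zero fun k _ => ?_
  have : Matrix.single j k (ρ j k) = ρ j k • Matrix.single j k (1 : ℂ) := by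
    rw [Matrix.smul_single, smul_eq_mul, mul_one]
  rw [this, _root_.map_smul]
  simp only [Matrix.smul_apply, smul_eq_mul]
  rw [hE j k hab, mul_zero]

/-- SIO completeness gives the column normalization. -/
lemma sio_normalization (c : Fin N → Fin d → ℂ) (π : Fin N → Equiv.Perm (Fin d))
    (hcomp : ∑ n, (Matrix.of fun a b => if a = π n b then c n b else 0)ᴴ *
        (Matrix.of fun a b => if a = π n b then c n b else 0) = 1) :
    ∀ k, ∑ n, Complex.normSq (c n k) = 1 := by
  intro k
  have h1 : (∑ n, (Matrix.of fun a b => if a = π n b then c n b else 0)ᴴ *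
      (Matrix.of fun a b => if a = π n b then c n b else 0)) k k
      = (1 : Matrix (Fin d) (Fin d) ℂ) k k := by rw [hcomp]
  rw [Matrix.sum_apply, Matrix.one_apply_eq] at h1
  have h2 : ∑ n, (Complex.normSq (c n k) : ℂ) = 1 := by
    rw [← h1]
    refine Finset.sum_congr rfl fun n _ => ?_
    rw [sio_conjT_mul, if_pos rfl, mul_comm, Complex.star_def, Complex.mul_conj]
  have := congrArg Complex.re h2
  simpa [Complex.re_sum] using this

lemma psd_diag_nonneg {M : Matrix (Fin d) (Fin d) ℂ} (h : M.PosSemidef) (j : Fin d) :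
    0 ≤ M j j := by
  exact h.diag_nonneg

lemma deph_eq_sum (ρ : Matrix (Fin d) (Fin d) ℂ) :
    deph ρ = ∑ k, ρ k k • Matrix.single k k (1 : ℂ) := by
  ext a b
  rw [Matrix.sum_apply]
  simp only [Matrix.smul_apply, stdBasisMatrix_apply', smul_eq_mul]
  rcases eq_or_ne a b with rfl | hab
  · rw [Finset.sum_eq_single a]
    · simp [deph, Matrix.diagonal_apply_eq]
    · intro k _ hk
      simp [Ne.symm hk]
    · simp
  · rw [show deph ρ a b = 0 from Matrix.diagonal_apply_ne _ hab]
    symm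
    apply Finset.sum_eq_zero
    intro k _
    rcases eq_or_ne a k with rfl | hak
    · simp [Ne.symm hab]
    · simp [hak]

/-- The closed form of an SIO with all-diagonal outputs. -/
lemma sio_formula (Φ : Matrix (Fin d) (Fin d) ℂ → Matrix (Fin d) (Fin d) ℂ)
    (c : Fin N → Fin d → ℂ) (π : Fin N → Equiv.Perm (Fin d))
    (hrep : ∀ ρ, Φ ρ = ∑ n, (Matrix.of fun a b => if a = π n b then c n b else 0) * ρ *
        (Matrix.of fun a b => if a = π n b then c n b else 0)ᴴ)
    (hdiagall : ∀ ρ, (Φ ρ).IsDiag) :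
    ∀ ρ, Φ ρ = ∑ k, ∑ n, (ρ k k * (Complex.normSq (c n k) : ℂ)) •
        Matrix.single (π n k) (π n k) (1 : ℂ) := by
  intro ρ
  ext a b
  rw [Matrix.sum_apply]
  rcases eq_or_ne a b with rfl | hab
  · rw [hrep, Matrix.sum_apply]
    rw [Finset.sum_congr rfl fun n (_ : n ∈ Finset.univ) => sio_apply (c n) (π n) ρ a a]
    simp only [Matrix.sum_apply, Matrix.smul_apply, smul_eq_mul]
    rw [Finset.sum_comm]
    refine Finset.sum_congr rfl fun n _ => ?_
    rw [Finset.sum_eq_single ((π n).symm a)]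
    · rw [show Matrix.single (π n ((π n).symm a)) (π n ((π n).symm a)) (1 : ℂ) a a = 1
        from by rw [Equiv.apply_symm_apply]; exact Matrix.single_apply_same a a 1]
      have hz : c n ((π n).symm a) * star (c n ((π n).symm a)) =
          (Complex.normSq (c n ((π n).symm a)) : ℂ) := Complex.mul_conj _
      rw [mul_one]
      calc c n ((π n).symm a) * ρ ((π n).symm a) ((π n).symm a) * star (c n ((π n).symm a))
          = ρ ((π n).symm a) ((π n).symm a) *
            (c n ((π n).symm a) * star (c n ((π n).symm a))) := by ring
        _ = _ := by rw [hz]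
    · intro k _ hk
      rw [Matrix.single_apply_of_ne, mul_zero]
      rintro ⟨h1, -⟩
      exact hk (by rw [← h1, Equiv.symm_apply_apply])
    · simp
  · rw [hdiagall ρ hab]
    symm
    apply Finset.sum_eq_zero
    intro k _
    rw [Matrix.sum_apply]
    apply Finset.sum_eq_zero
    intro n _
    rw [Matrix.smul_apply, Matrix.single_apply_of_ne, smul_zero]
    rintro ⟨h1, h2⟩
    exact hab (h1 ▸ h2 ▸ rfl)

lemma stdBasis_diag_eq_rankOne (k : Fin d) :
    Matrix.single k k (1 : ℂ) = rankOne (fun i => if i = k then 1 else 0) := by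
  ext a b
  rw [stdBasisMatrix_apply']
  by_cases hak : a = k <;> by_cases hbk : b = k <;> simp [rankOne, hak, hbk]

lemma kraus_trace_preserving (K : Fin N → Matrix (Fin d) (Fin d) ℂ)
    (hcomp : ∑ n, (K n)ᴴ * K n = 1) (ρ : Matrix (Fin d) (Fin d) ℂ) :
    (∑ n, K n * ρ * (K n)ᴴ).trace = ρ.trace := by
  rw [Matrix.trace_sum]
  have : ∀ n : Fin N, (K n * ρ * (K n)ᴴ).trace = ((K n)ᴴ * K n * ρ).trace := by
    intro n
    rw [Matrix.trace_mul_cycle]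
  rw [Finset.sum_congr rfl fun n _ => this n, ← Matrix.trace_sum, ← Finset.sum_mul, hcomp,
    one_mul]

lemma kraus_posSemidef (K : Fin N → Matrix (Fin d) (Fin d) ℂ)
    {ρ : Matrix (Fin d) (Fin d) ℂ} (hρ : ρ.PosSemidef) :
    (∑ n, K n * ρ * (K n)ᴴ).PosSemidef := by
  apply Finset.sum_induction
  · exact fun a b ha hb => ha.add hb
  · exact Matrix.PosSemidef.zero
  · exact fun n _ => hρ.mul_mul_conjTranspose_same (K n)

lemma psd_stdBasis (k : Fin d) : (Matrix.single k k (1 : ℂ)).PosSemidef := by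
  rw [stdBasis_diag_eq_rankOne]
  exact rankOne_posSemidef _

lemma trace_stdBasis_diag (k : Fin d) : (Matrix.single k k (1 : ℂ)).trace = 1 := by
  rw [stdBasis_diag_eq_rankOne]
  exact rankOne_trace_single k

lemma sum_finProd {M : Type*} [AddCommMonoid M] (f : Fin d × Fin d → M) :
    ∑ n : Fin (d * d), f (finProdFinEquiv.symm n) = ∑ j, ∑ k, f (j, k) :=
  (Equiv.sum_comp finProdFinEquiv.symm f).trans (Fintype.sum_prod_type f)

lemma dio_cbc_sio (Φ : Matrix (Fin d) (Fin d) ℂ → Matrix (Fin d) (Fin d) ℂ)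
    (hD : IsDIO Φ) (hC : IsCBCfn Φ) : IsSIO Φ := by
  obtain ⟨⟨NK, K, hKcomp, hKinc, hKrep⟩, hdiag⟩ := hC
  have hall : ∀ ρ, (Φ ρ).IsDiag := kraus_diag_all K Φ hKrep hdiag
  have hdep : ∀ ρ, Φ ρ = Φ (deph ρ) := by
    intro ρ
    have h1 : deph (Φ ρ) = Φ ρ := (hall ρ).diagonal_diag
    rw [← hD.2 ρ, h1]
  -- the transition coefficients
  set p : Fin d → Fin d → ℝ := fun j k => (Φ (Matrix.single k k 1) j j).re with hpdef
  have hpsd : ∀ k, (Φ (Matrix.single k k (1 : ℂ))).PosSemidef := by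
    intro k
    rw [hKrep]
    exact kraus_posSemidef K (psd_stdBasis k)
  have hple : ∀ j k, 0 ≤ Φ (Matrix.single k k (1 : ℂ)) j j :=
    fun j k => psd_diag_nonneg (hpsd k) j
  have hp0 : ∀ j k, 0 ≤ p j k := by
    intro j k
    have := (Complex.le_def.mp (hple j k)).1
    simpa using this
  have hpval : ∀ j k, Φ (Matrix.single k k (1 : ℂ)) j j = ((p j k : ℝ) : ℂ) := by
    intro j k
    have him := (Complex.le_def.mp (hple j k)).2
    apply Complex.ext
    · simp [hpdef]
    · simp [← him]
  have hcol : ∀ k, ∑ j, p j k = 1 := by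
    intro k
    have ht : (Φ (Matrix.single k k (1 : ℂ))).trace = 1 := by
      rw [hKrep, kraus_trace_preserving K hKcomp, trace_stdBasis_diag]
    have ht2 : ∑ j, ((p j k : ℝ) : ℂ) = 1 := by
      rw [← ht]
      rw [Matrix.trace]
      exact Finset.sum_congr rfl fun j _ => (hpval j k).symm
    have := congrArg Complex.re ht2
    simpa [Complex.re_sum] using this
  -- evaluation of Φ on the diagonal
  have hEval : ∀ ρ (a b : Fin d),
      Φ ρ a b = ∑ k, ρ k k * Φ (Matrix.single k k (1 : ℂ)) a b := by
    intro ρ a b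
    have h1 : Φ (deph ρ) = krausMap K (deph ρ) := hKrep _
    rw [hdep ρ, h1, deph_eq_sum, map_sum, Matrix.sum_apply]
    refine Finset.sum_congr rfl fun k _ => ?_
    rw [_root_.map_smul, Matrix.smul_apply, smul_eq_mul,
      show krausMap K (Matrix.single k k (1 : ℂ)) = Φ (Matrix.single k k 1) from
        (hKrep _).symm]
  classical
  refine ⟨d * d, fun n m => if m = (finProdFinEquiv.symm n).2 then
      ((Real.sqrt (p (finProdFinEquiv.symm n).1 (finProdFinEquiv.symm n).2) : ℝ) : ℂ) else 0,
    fun n => Equiv.swap (finProdFinEquiv.symm n).1 (finProdFinEquiv.symm n).2, ?_, ?_⟩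
  · -- completeness
    ext x y
    rw [Matrix.sum_apply]
    rw [Finset.sum_congr rfl fun n (_ : n ∈ Finset.univ) => sio_conjT_mul _ _ x y]
    rcases eq_or_ne x y with rfl | hxy
    · rw [Matrix.one_apply_eq]
      simp only [if_pos rfl]
      refine Eq.trans (sum_finProd
        (fun q : Fin d × Fin d => star (if x = q.2 then ((Real.sqrt (p q.1 q.2) : ℝ) : ℂ) else 0) *
          (if x = q.2 then ((Real.sqrt (p q.1 q.2) : ℝ) : ℂ) else 0))) ?_
      · have hinner : ∀ j : Fin d,
            (∑ k, star (if x = k then ((Real.sqrt (p j k) : ℝ) : ℂ) else 0) *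
              (if x = k then ((Real.sqrt (p j k) : ℝ) : ℂ) else 0)) = ((p j x : ℝ) : ℂ) := by
          intro j
          rw [Finset.sum_eq_single x]
          · rw [if_pos rfl, Complex.star_def, Complex.conj_ofReal, ← Complex.ofReal_mul,
              Real.mul_self_sqrt (hp0 j x)]
          · intro k _ hk
            rw [if_neg (Ne.symm hk), star_zero, zero_mul]
          · simp
        rw [Finset.sum_congr rfl fun j _ => hinner j, ← Complex.ofReal_sum, hcol]
        norm_num
    · rw [Matrix.one_apply_ne hxy]
      exact Finset.sum_eq_zero fun n _ => if_neg hxy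
  · -- representation
    intro ρ
    ext a b
    rw [Matrix.sum_apply]
    rw [Finset.sum_congr rfl fun n (_ : n ∈ Finset.univ) => sio_apply _ _ ρ a b]
    rw [hEval ρ a b]
    have hcond : ∀ (j k z : Fin d), (Equiv.swap j k z = k) = (z = j) := by
      intro j k z
      apply propext
      constructor
      · intro h
        have h2 : Equiv.swap j k z = Equiv.swap j k j := by
          rw [h, Equiv.swap_apply_left]
        exact (Equiv.swap j k).injective h2
      · rintro rfl
        exact Equiv.swap_apply_left _ _
    refine Eq.trans ?_ (sum_finProd (fun q : Fin d × Fin d =>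
      (if (Equiv.swap q.1 q.2).symm a = q.2 then ((Real.sqrt (p q.1 q.2) : ℝ) : ℂ) else 0) *
      ρ ((Equiv.swap q.1 q.2).symm a) ((Equiv.swap q.1 q.2).symm b) *
      star (if (Equiv.swap q.1 q.2).symm b = q.2 then ((Real.sqrt (p q.1 q.2) : ℝ) : ℂ)
        else 0))).symm
    simp only [Equiv.symm_swap, hcond]
    have hterm : ∀ j k : Fin d,
        (if a = j then ((Real.sqrt (p j k) : ℝ) : ℂ) else 0) *
          ρ (Equiv.swap j k a) (Equiv.swap j k b) *
          star (if b = j then ((Real.sqrt (p j k) : ℝ) : ℂ) else 0) =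
        if a = j ∧ b = j then ((p j k : ℝ) : ℂ) * ρ k k else 0 := by
      intro j k
      by_cases haj : a = j <;> by_cases hbj : b = j
      · simp only [haj, hbj, eq_self_iff_true, if_true, ite_true, and_self, Equiv.swap_apply_left, Complex.star_def,
          Complex.conj_ofReal]
        rw [show ((p j k : ℝ) : ℂ) = ((Real.sqrt (p j k) : ℝ) : ℂ) * ((Real.sqrt (p j k) : ℝ) : ℂ)
          from by rw [← Complex.ofReal_mul, Real.mul_self_sqrt (hp0 j k)]]
        ring
      · simp [haj, hbj]
      · simp [haj, hbj]
      · simp [haj, hbj]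
    refine Eq.trans ?_
      (Finset.sum_congr rfl fun j _ => Finset.sum_congr rfl fun k _ => (hterm j k).symm)
    rcases eq_or_ne a b with rfl | hab
    · simp only [and_self]
      rw [Finset.sum_comm]
      have hcol2 : ∀ k : Fin d,
          (∑ j, if a = j then ((p j k : ℝ) : ℂ) * ρ k k else 0) = ((p a k : ℝ) : ℂ) * ρ k k := by
        intro k
        rw [Finset.sum_ite_eq]
        simp
      rw [Finset.sum_congr rfl fun k _ => hcol2 k]
      refine Finset.sum_congr rfl fun k _ => ?_
      rw [hpval]
      ring
    · refine Eq.trans (Finset.sum_eq_zero fun k _ => ?_)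
        (Finset.sum_eq_zero fun j _ => Finset.sum_eq_zero fun k _ => ?_).symm
      · rw [hall (Matrix.single k k 1) hab, mul_zero]
      · rw [if_neg]
        rintro ⟨h1, h2⟩
        exact hab (h1.trans h2.symm)


/-- `SIO ∩ CBC = DIO ∩ CBC`, and every channel in `SIO ∩ CBC` has the form
`ρ ↦ ∑_k ρ_{kk} ∑_n |d_{nk}|² |π_n(k)⟩⟨π_n(k)|` (with `∑_n |d_{nk}|² = 1`), which depends
only on the diagonal of `ρ`. -/
theorem sio_cap_cbc_eq_dio_cap_cbc (d : ℕ)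
    (Φ : Matrix (Fin d) (Fin d) ℂ → Matrix (Fin d) (Fin d) ℂ) :
    ((IsSIO Φ ∧ IsCBCfn Φ) ↔ (IsDIO Φ ∧ IsCBCfn Φ)) ∧
    ((IsSIO Φ ∧ IsCBCfn Φ) →
      ∃ (N : ℕ) (c : Fin N → Fin d → ℂ) (π : Fin N → Equiv.Perm (Fin d)),
        (∀ k, ∑ n, Complex.normSq (c n k) = 1) ∧
        (∀ ρ, Φ ρ = ∑ k, ∑ n, (ρ k k * (Complex.normSq (c n k) : ℂ)) •
          Matrix.single (π n k) (π n k) (1 : ℂ)) ∧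
        ∀ ρ σ : Matrix (Fin d) (Fin d) ℂ, (∀ k, ρ k k = σ k k) → Φ ρ = Φ σ) := by
  constructor
  · constructor
    · rintro ⟨hS, hC⟩
      refine ⟨?_, hC⟩
      obtain ⟨N, c, π, hcomp, hrep⟩ := hS
      obtain ⟨⟨NK, K, hKcomp, hKinc, hKrep⟩, hdiag⟩ := hC
      have hall := kraus_diag_all K Φ hKrep hdiag
      constructor
      · exact ⟨N, fun n => Matrix.of fun a b => if a = π n b then c n b else 0, hcomp, hrep⟩
      · intro ρ
        have h1 : deph (Φ ρ) = Φ ρ := (hall ρ).diagonal_diag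
        have h2 : Φ (deph ρ) = Φ ρ := by
          rw [sio_formula Φ c π hrep hall (deph ρ), sio_formula Φ c π hrep hall ρ]
          refine Finset.sum_congr rfl fun k _ => ?_
          rw [show deph ρ k k = ρ k k from Matrix.diagonal_apply_eq _ k]
        rw [h1, h2]
    · rintro ⟨hD, hC⟩
      exact ⟨dio_cbc_sio Φ hD hC, hC⟩
  · rintro ⟨hS, hC⟩
    obtain ⟨N, c, π, hcomp, hrep⟩ := hS
    obtain ⟨⟨NK, K, hKcomp, hKinc, hKrep⟩, hdiag⟩ := hC
    have hall := kraus_diag_all K Φ hKrep hdiag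
    refine ⟨N, c, π, sio_normalization c π hcomp, sio_formula Φ c π hrep hall, ?_⟩
    intro ρ σ hdg
    rw [sio_formula Φ c π hrep hall ρ, sio_formula Φ c π hrep hall σ]
    refine Finset.sum_congr rfl fun k _ => ?_
    rw [hdg k]
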